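/- The polynomial complex ℝ → P_k(T) →(∇) P_{k-1}(T; ℝ^d) →(skw∇) P_{k-2}(T; 𝕂) is exact at P_{k-1}(T; ℝ^d): a vector polynomial v ∈ P_{k-1}(T; ℝ^d) satisfies skw∇v = 0 if and only if v = ∇q for some q ∈ P_k(T). -/

import Mathlib

open MvPolynomial

private lemma coeff_pderiv' {σ : Type*} [DecidableEq σ] (i : σ) (p : MvPolynomial σ ℝ)
    (β : σ →₀ ℕ) :
    coeff β (pderiv i p) = ((β i : ℝ) + 1) * coeff (β + Finsupp.single i 1) p := by
  induction p using MvPolynomial.induction_on' with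
  | add p q hp hq => simp [hp, hq, mul_add]
  | monomial s a =>
    rw [pderiv_monomial]
    rw [coeff_monomial, coeff_monomial]
    by_cases hs : s = β + Finsupp.single i 1
    · subst hs
      rw [if_pos (add_tsub_cancel_right β (Finsupp.single i 1)), if_pos rfl]
      rw [Finsupp.add_apply, Finsupp.single_eq_same]
      push_cast; ring
    · rw [if_neg hs]
      by_cases h2 : s - Finsupp.single i 1 = β
      · by_cases h3 : s i = 0
        · rw [if_pos h2]
          simp [h3]
        · exfalso
          apply hs
          rw [← h2, tsub_add_cancel_of_le]
          rw [Finsupp.single_le_iff]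
          omega
      · rw [if_neg h2, mul_zero]

theorem polynomial_complex_exact_at_vectors (d k : ℕ) (hk : 1 ≤ k)
    (v : Fin d → MvPolynomial (Fin d) ℝ)
    (hv : ∀ j, (v j).totalDegree ≤ k - 1) :
    (∀ i j, pderiv i (v j) = pderiv j (v i)) ↔
      ∃ q : MvPolynomial (Fin d) ℝ, q.totalDegree ≤ k ∧ ∀ j, v j = pderiv j q := by
  classical
  constructor
  · intro h
    set w : MvPolynomial (Fin d) ℝ := ∑ i : Fin d, X i * v i with hw
    have hwdeg : w.totalDegree ≤ k := by
      apply totalDegree_finsetSum_le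
      intro i _
      calc (X i * v i).totalDegree ≤ (X (R := ℝ) i).totalDegree + (v i).totalDegree :=
            totalDegree_mul _ _
        _ ≤ 1 + (k - 1) := by
            gcongr
            · exact (totalDegree_X i).le
            · exact hv i
        _ = k := by omega
    set q : MvPolynomial (Fin d) ℝ :=
      ∑ α ∈ w.support, monomial α ((((α.sum fun _ n => n : ℕ) : ℝ))⁻¹ * coeff α w) with hq
    have hqc : ∀ β, coeff β q = (((β.sum fun _ n => n : ℕ) : ℝ))⁻¹ * coeff β w := by
      intro β
      rw [hq, coeff_sum]
      simp only [coeff_monomial]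
      rw [Finset.sum_ite_eq' w.support β]
      split_ifs with hmem
      · rfl
      · rw [notMem_support_iff.mp hmem, mul_zero]
    have key : ∀ (β : Fin d →₀ ℕ) (j : Fin d),
        ((β j : ℝ) + 1) * coeff (β + Finsupp.single j 1) w
          = (((β.sum fun _ n => n : ℕ) : ℝ) + 1) * coeff β (v j) := by
      intro β j
      rw [hw, coeff_sum, Finset.mul_sum]
      have hterm : ∀ i : Fin d,
          ((β j : ℝ) + 1) * coeff (β + Finsupp.single j 1) (X i * v i)
            = ((β i : ℝ) + if i = j then 1 else 0) * coeff β (v j) := by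
        intro i
        rw [coeff_X_mul']
        have happ : ((β + Finsupp.single j 1) : Fin d →₀ ℕ) i
            = β i + if j = i then 1 else 0 := by
          rw [Finsupp.add_apply, Finsupp.single_apply]
        by_cases hij : i = j
        · subst hij
          have hmem : i ∈ ((β + Finsupp.single i 1) : Fin d →₀ ℕ).support := by
            rw [Finsupp.mem_support_iff, happ, if_pos rfl]
            omega
          rw [if_pos hmem, if_pos rfl, add_tsub_cancel_right]
        · by_cases hbi : β i = 0
          · have hmem : i ∉ ((β + Finsupp.single j 1) : Fin d →₀ ℕ).support := by
              rw [Finsupp.mem_support_iff, happ, if_neg (fun hji => hij hji.symm)]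
              omega
            rw [if_neg hmem, if_neg hij]
            simp [hbi]
          · have hmem : i ∈ ((β + Finsupp.single j 1) : Fin d →₀ ℕ).support := by
              rw [Finsupp.mem_support_iff, happ, if_neg (fun hji => hij hji.symm)]
              omega
            rw [if_pos hmem, if_neg hij]
            have hle : Finsupp.single i 1 ≤ β := by
              rw [Finsupp.single_le_iff]; omega
            have hsym := congrArg (coeff (β - Finsupp.single i 1)) (h i j)
            rw [coeff_pderiv', coeff_pderiv'] at hsym
            have e1 : β - Finsupp.single i 1 + Finsupp.single i 1 = β :=
              tsub_add_cancel_of_le hle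
            have e2 : β - Finsupp.single i 1 + Finsupp.single j 1
                = β + Finsupp.single j 1 - Finsupp.single i 1 := by
              ext a
              simp only [Finsupp.add_apply, Finsupp.tsub_apply, Finsupp.single_apply]
              split_ifs <;> omega
            have e3 : ((β - Finsupp.single i 1) : Fin d →₀ ℕ) i = β i - 1 := by
              rw [Finsupp.tsub_apply, Finsupp.single_eq_same]
            have e4 : ((β - Finsupp.single i 1) : Fin d →₀ ℕ) j = β j := by
              rw [Finsupp.tsub_apply, Finsupp.single_apply, if_neg hij]
              omega
            rw [e1, e2, e3, e4] at hsym
            have e5 : ((β i - 1 : ℕ) : ℝ) + 1 = (β i : ℝ) := by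
              have h1 : 1 ≤ β i := by omega
              push_cast [h1]; ring
            rw [e5] at hsym
            rw [← hsym]
            ring
      rw [Finset.sum_congr rfl fun i _ => hterm i]
      rw [← Finset.sum_mul]
      congr 1
      rw [Finset.sum_add_distrib, Finset.sum_ite_eq' Finset.univ j fun _ => (1 : ℝ)]
      rw [if_pos (Finset.mem_univ j)]
      congr 1
      rw [Finsupp.sum_fintype _ _ fun _ => rfl]
      push_cast
      rfl
    refine ⟨q, ?_, ?_⟩
    · apply totalDegree_finsetSum_le
      intro α hα
      exact le_trans (totalDegree_monomial_le _ _) (le_trans (le_totalDegree hα) hwdeg)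
    · intro j
      ext β
      rw [coeff_pderiv', hqc]
      have hdeg : ((β + Finsupp.single j 1).sum fun _ n => n) = (β.sum fun _ n => n) + 1 := by
        rw [Finsupp.sum_add_index' (fun _ => rfl) (fun _ _ _ => rfl),
          Finsupp.sum_single_index rfl]
      rw [hdeg]
      have hne : (((β.sum fun _ n => n : ℕ) : ℝ)) + 1 ≠ 0 := by positivity
      have h2 := key β j
      have e6 : coeff β (v j)
          = ((((β.sum fun _ n => n : ℕ) : ℝ)) + 1)⁻¹
            * (((((β.sum fun _ n => n : ℕ) : ℝ)) + 1) * coeff β (v j)) := by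
        rw [inv_mul_cancel_left₀ hne]
      push_cast
      push_cast at h2 e6
      rw [e6, ← h2]
      ring
  · rintro ⟨q, hq, hvq⟩ i j
    rw [hvq i, hvq j]
    ext β
    rw [coeff_pderiv', coeff_pderiv', coeff_pderiv', coeff_pderiv']
    rcases eq_or_ne i j with rfl | hij
    · rfl
    · have e1 : β + Finsupp.single j 1 + Finsupp.single i 1
          = β + Finsupp.single i 1 + Finsupp.single j 1 := by
        rw [add_assoc, add_assoc, add_comm (Finsupp.single j 1)]
      rw [e1]
      have e2 : ((β + Finsupp.single j 1) : Fin d →₀ ℕ) i = β i := by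
        rw [Finsupp.add_apply, Finsupp.single_apply, if_neg (fun hji => hij hji.symm)]
        omega
      have e3 : ((β + Finsupp.single i 1) : Fin d →₀ ℕ) j = β j := by
        rw [Finsupp.add_apply, Finsupp.single_apply, if_neg hij]
        omega
      rw [e2, e3]
      ring
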